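/- arXiv:1405.1545 — 3 statements merged into one kernel-verified Lean document; each statement's English description precedes it below -/
import Mathlib

section
/- Let C be a finite set with maps p : C → V and q : C → F to finite sets V and F, with F nonempty, and let θ : C → ℝ. For D ∈ F let k(D) be the number of c ∈ C with q(c) = D, and assume k(D) ≥ 3 for all D ∈ F. Suppose that for every v ∈ V the sum of θ(c) over all c with p(c) = v equals 2π, and that for every D ∈ F the sum of θ(c) over all c with q(c) = D is strictly less than (k(D) − 2)π. Then 2·(|V| + |F|) < Σ_{D∈F} k(D). -/
open Real
open scoped Classical

/-- If `C` is a finite set of corners with vertex map `p : C → V` and face map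
`q : C → F` (`F` nonempty), `θ` assigns an angle to each corner, each face `D`
has `k D ≥ 3` corners, the angles around each vertex sum to `2π`, and the angles
of each face `D` sum to strictly less than `(k D − 2)π`, then
`2(|V| + |F|) < Σ_D k(D)`, i.e. the Euler characteristic is negative. -/
theorem combinatorial_negative_euler_characteristic
    {C V F : Type*} [Fintype C] [Fintype V] [Fintype F] [Nonempty F]
    (p : C → V) (q : C → F) (θ : C → ℝ) (k : F → ℕ)
    (hk : ∀ D, k D = (Finset.univ.filter fun c => q c = D).card)
    (hk3 : ∀ D, 3 ≤ k D)
    (hvtx : ∀ v, ∑ c ∈ Finset.univ.filter (fun c => p c = v), θ c = 2 * π)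
    (hface : ∀ D, ∑ c ∈ Finset.univ.filter (fun c => q c = D), θ c
        < ((k D : ℝ) - 2) * π) :
    2 * (Fintype.card V + Fintype.card F) < ∑ D : F, k D := by
  have h1 : (2 * π) * Fintype.card V = ∑ c : C, θ c := by
    rw [← Finset.sum_fiberwise Finset.univ p θ]
    simp [hvtx, mul_comm]
  have h2 : ∑ c : C, θ c < ∑ D : F, ((k D : ℝ) - 2) * π := by
    rw [← Finset.sum_fiberwise Finset.univ q θ]
    exact Finset.sum_lt_sum_of_nonempty Finset.univ_nonempty fun D _ => hface D
  have h3 : (2 * π) * Fintype.card V < (∑ D : F, ((k D : ℝ) - 2)) * π := by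
    rw [Finset.sum_mul]; exact h1 ▸ h2
  have hkey : (2 : ℝ) * (Fintype.card V + Fintype.card F) < ∑ D : F, (k D : ℝ) := by
    have hπ := Real.pi_pos
    have : (2 : ℝ) * Fintype.card V < ∑ D : F, ((k D : ℝ) - 2) := by
      have := (mul_lt_mul_iff_of_pos_right hπ).mp (by linarith [h3] : 2 * (Fintype.card V : ℝ) * π < (∑ D : F, ((k D : ℝ) - 2)) * π)
      linarith
    rw [Finset.sum_sub_distrib] at this
    simp only [Finset.sum_const, Finset.card_univ, nsmul_eq_mul, mul_one] at this
    linarith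
  exact_mod_cast hkey
end

section
/- Let C be a finite set with maps p : C → V and q : C → F to finite sets V and F, and let θ : C → ℝ. For D ∈ F let k(D) be the number of c ∈ C with q(c) = D, and assume k(D) ≥ 3 for all D ∈ F. Suppose that for every v ∈ V the sum of θ(c) over all c with p(c) = v equals 2π, and that for every D ∈ F the sum of θ(c) over all c with q(c) = D is at most (k(D) − 2)π. Then 2·(|V| + |F|) ≤ Σ_{D∈F} k(D), and equality holds if and only if for every D ∈ F the sum of θ(c) over all c with q(c) = D equals exactly (k(D) − 2)π. -/
open Real
open scoped Classical

/-- If `C` is a finite set of corners with vertex map `p : C → V` and face map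
`q : C → F`, `θ` assigns an angle to each corner, each face `D` has `k D ≥ 3`
corners, the angles around each vertex sum to `2π`, and the angles of each face
`D` sum to at most `(k D − 2)π`, then `2(|V| + |F|) ≤ Σ_D k(D)`, with equality
iff every face attains angle sum exactly `(k D − 2)π`. -/
theorem combinatorial_nonpositive_euler_characteristic
    {C V F : Type*} [Fintype C] [Fintype V] [Fintype F]
    (p : C → V) (q : C → F) (θ : C → ℝ) (k : F → ℕ)
    (hk : ∀ D, k D = (Finset.univ.filter fun c => q c = D).card)
    (hk3 : ∀ D, 3 ≤ k D)
    (hvtx : ∀ v, ∑ c ∈ Finset.univ.filter (fun c => p c = v), θ c = 2 * π)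
    (hface : ∀ D, ∑ c ∈ Finset.univ.filter (fun c => q c = D), θ c
        ≤ ((k D : ℝ) - 2) * π) :
    2 * (Fintype.card V + Fintype.card F) ≤ ∑ D : F, k D ∧
      (2 * (Fintype.card V + Fintype.card F) = ∑ D : F, k D ↔
        ∀ D, ∑ c ∈ Finset.univ.filter (fun c => q c = D), θ c
          = ((k D : ℝ) - 2) * π) := by
  have hA1 : ∑ v : V, ∑ c ∈ Finset.univ.filter (fun c => p c = v), θ c
      = ∑ c : C, θ c :=
    Finset.sum_fiberwise_of_maps_to (fun c _ => Finset.mem_univ (p c)) θ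
  have hA2 : ∑ D : F, ∑ c ∈ Finset.univ.filter (fun c => q c = D), θ c
      = ∑ c : C, θ c :=
    Finset.sum_fiberwise_of_maps_to (fun c _ => Finset.mem_univ (q c)) θ
  have hV : ∑ c : C, θ c = (Fintype.card V : ℝ) * (2 * π) := by
    rw [← hA1, Finset.sum_congr rfl fun v _ => hvtx v, Finset.sum_const,
      Finset.card_univ, nsmul_eq_mul]
  have hFle : ∑ D : F, ∑ c ∈ Finset.univ.filter (fun c => q c = D), θ c
      ≤ ∑ D : F, ((k D : ℝ) - 2) * π :=
    Finset.sum_le_sum fun D _ => hface D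
  have hRHS : ∑ D : F, ((k D : ℝ) - 2) * π
      = ((∑ D : F, (k D : ℝ)) - 2 * Fintype.card F) * π := by
    simp only [sub_mul, Finset.sum_sub_distrib, Finset.sum_mul, Finset.sum_const,
      Finset.card_univ, nsmul_eq_mul]
    ring
  have hle : (2 * (Fintype.card V + Fintype.card F) : ℝ) ≤ ∑ D : F, (k D : ℝ) := by
    have h : ∑ c : C, θ c ≤ ∑ D : F, ((k D : ℝ) - 2) * π := hA2 ▸ hFle
    rw [hV, hRHS] at h
    nlinarith [pi_pos]
  have hleN : 2 * (Fintype.card V + Fintype.card F) ≤ ∑ D : F, k D := by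
    have : ((2 * (Fintype.card V + Fintype.card F) : ℕ) : ℝ)
        ≤ ((∑ D : F, k D : ℕ) : ℝ) := by push_cast; linarith
    exact_mod_cast this
  refine ⟨hleN, ?_⟩
  have heqiff : (∑ D : F, ∑ c ∈ Finset.univ.filter (fun c => q c = D), θ c
      = ∑ D : F, ((k D : ℝ) - 2) * π) ↔
      ∀ D, ∑ c ∈ Finset.univ.filter (fun c => q c = D), θ c = ((k D : ℝ) - 2) * π := by
    constructor
    · intro h D
      exact (Finset.sum_eq_sum_iff_of_le fun D _ => hface D).mp h D (Finset.mem_univ D)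
    · intro h
      exact Finset.sum_congr rfl fun D _ => h D
  rw [← heqiff]
  constructor
  · intro h
    have hr : (2 * ((Fintype.card V : ℝ) + Fintype.card F)) = ∑ D : F, (k D : ℝ) := by
      exact_mod_cast congrArg (Nat.cast : ℕ → ℝ) h
    rw [hA2, hV, hRHS]
    linear_combination π * hr
  · intro h
    have hs : ∑ c : C, θ c = ∑ D : F, ((k D : ℝ) - 2) * π := by rw [← hA2, h]
    rw [hV, hRHS] at hs
    have h2 : (Fintype.card V : ℝ) * 2 = (∑ D : F, (k D : ℝ)) - 2 * Fintype.card F :=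
      mul_right_cancel₀ pi_ne_zero (by rw [← hs]; ring)
    have hcast : ((2 * (Fintype.card V + Fintype.card F) : ℕ) : ℝ)
        = ((∑ D : F, k D : ℕ) : ℝ) := by push_cast; linarith
    exact_mod_cast hcast
end

section
/- Let C be a finite set with a map p : C → E to a finite set E, and let β : C → ℝ with 0 ≤ β(c) ≤ π for all c. For e ∈ E let m(e), n(e), k(e) be the numbers of c with p(c) = e and β(c) = 0, β(c) = π, 0 < β(c) < π respectively; assume k(e) ≥ 1 for every e ∈ E, and that for every e ∈ E the sum of β(c) over all c with p(c) = e equals 2π. Let S be a finite family of triples (c_1, c_2, c_3) of elements of C such that each triple either satisfies 0 < β(c_i) < π for i = 1, 2, 3 and β(c_1) + β(c_2) + β(c_3) < π, or satisfies {β(c_1), β(c_2), β(c_3)} = {0, 0, π} as a multiset. For t > 0 define α_t : C → ℝ by α_t(c) = t if β(c) = 0, α_t(c) = π − 3t if β(c) = π, and α_t(c) = β(c) − ((m(p(c)) − 3·n(p(c)))/k(p(c)))·t if 0 < β(c) < π. Then there exists t_0 > 0 such that for all t with 0 < t < t_0: (i) α_t(c) > 0 for every c ∈ C; (ii) for every e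 ∈ E the sum of α_t(c) over all c with p(c) = e equals 2π; and (iii) for every triple (c_1, c_2, c_3) ∈ S, α_t(c_1) + α_t(c_2) + α_t(c_3) < π. -/
open Real
open scoped Classical

/-- Combinatorial form of Theorem 4.2: deforming the non-negative dihedral
angles `β` of a partially flat angled triangulation yields, for all sufficiently
small `t > 0`, an angle structure `α t`: all angles positive, angles around each
edge summing to `2π`, and the three angles of each external-face triple summing
to less than `π`. -/
theorem partially_flat_deformation_angle_structure
    {C E : Type*} [Fintype C] [Fintype E]
    (p : C → E) (β : C → ℝ)
    (hβ : ∀ c, 0 ≤ β c ∧ β c ≤ π)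
    (m n k : E → ℕ)
    (hm : ∀ e, m e = (Finset.univ.filter fun c => p c = e ∧ β c = 0).card)
    (hn : ∀ e, n e = (Finset.univ.filter fun c => p c = e ∧ β c = π).card)
    (hk : ∀ e, k e = (Finset.univ.filter fun c => p c = e ∧ 0 < β c ∧ β c < π).card)
    (hk1 : ∀ e, 1 ≤ k e)
    (hsum : ∀ e, ∑ c ∈ Finset.univ.filter (fun c => p c = e), β c = 2 * π)
    (S : Finset (C × C × C))
    (hS : ∀ s ∈ S,
      ((0 < β s.1 ∧ β s.1 < π) ∧ (0 < β s.2.1 ∧ β s.2.1 < π) ∧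
        (0 < β s.2.2 ∧ β s.2.2 < π) ∧ β s.1 + β s.2.1 + β s.2.2 < π) ∨
      (({β s.1, β s.2.1, β s.2.2} : Multiset ℝ) = ({0, 0, π} : Multiset ℝ)))
    (α : ℝ → C → ℝ)
    (hα : ∀ t c, α t c =
      if β c = 0 then t
      else if β c = π then π - 3 * t
      else β c - (((m (p c) : ℝ) - 3 * (n (p c) : ℝ)) / (k (p c) : ℝ)) * t) :
    ∃ t₀ > 0, ∀ t, 0 < t → t < t₀ →
      (∀ c, 0 < α t c) ∧
      (∀ e, ∑ c ∈ Finset.univ.filter (fun c => p c = e), α t c = 2 * π) ∧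
      (∀ s ∈ S, α t s.1 + α t s.2.1 + α t s.2.2 < π) := by
  have hπ := Real.pi_pos
  -- edge sums hold for every t
  have hedge : ∀ t (e : E),
      ∑ c ∈ Finset.univ.filter (fun c => p c = e), α t c = 2 * π := by
    intro t e
    set F : Finset C := Finset.univ.filter (fun c : C => p c = e) with hF
    have hkpos : (0 : ℝ) < (k e : ℝ) := by
      exact_mod_cast Nat.lt_of_lt_of_le Nat.zero_lt_one (hk1 e)
    set M : ℝ := ((m e : ℝ) - 3 * (n e : ℝ)) / (k e : ℝ) with hM
    have hsplit :
        ∑ c ∈ F, α t c =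
          (∑ c ∈ F.filter (fun c => β c = 0), α t c) +
          ((∑ c ∈ (F.filter (fun c => ¬ β c = 0)).filter (fun c => β c = π), α t c) +
           (∑ c ∈ (F.filter (fun c => ¬ β c = 0)).filter (fun c => ¬ β c = π), α t c)) := by
      rw [Finset.sum_filter_add_sum_filter_not
        (F.filter (fun c => ¬ β c = 0)) (fun c => β c = π) (α t),
        Finset.sum_filter_add_sum_filter_not F (fun c => β c = 0) (α t)]
    have hA : ∑ c ∈ F.filter (fun c => β c = 0), α t c = (m e : ℝ) * t := by
      have h1 : ∀ c ∈ F.filter (fun c => β c = 0), α t c = t := by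
        intro c hc
        simp only [Finset.mem_filter] at hc
        rw [hα, if_pos hc.2]
      rw [Finset.sum_congr rfl h1, Finset.sum_const, nsmul_eq_mul]
      congr 2
      rw [hm, hF, Finset.filter_filter]
    have hBcard : ((F.filter (fun c => ¬ β c = 0)).filter (fun c => β c = π)).card = n e := by
      rw [hn, hF, Finset.filter_filter, Finset.filter_filter]
      congr 1
      ext c
      simp only [Finset.mem_filter, Finset.mem_univ, true_and]
      constructor
      · rintro ⟨h1, _, h3⟩; exact ⟨h1, h3⟩
      · rintro ⟨h1, h3⟩; exact ⟨h1, by rw [h3]; exact hπ.ne', h3⟩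
    have hB : ∑ c ∈ (F.filter (fun c => ¬ β c = 0)).filter (fun c => β c = π), α t c
        = (n e : ℝ) * (π - 3 * t) := by
      have h1 : ∀ c ∈ (F.filter (fun c => ¬ β c = 0)).filter (fun c => β c = π),
          α t c = π - 3 * t := by
        intro c hc
        simp only [Finset.mem_filter] at hc
        rw [hα, if_neg hc.1.2, if_pos hc.2]
      rw [Finset.sum_congr rfl h1, Finset.sum_const, nsmul_eq_mul, hBcard]
    have hDcard : ((F.filter (fun c => ¬ β c = 0)).filter (fun c => ¬ β c = π)).card = k e := by
      rw [hk, hF, Finset.filter_filter, Finset.filter_filter]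
      congr 1
      ext c
      simp only [Finset.mem_filter, Finset.mem_univ, true_and]
      constructor
      · rintro ⟨h1, h2, h3⟩
        exact ⟨h1, lt_of_le_of_ne (hβ c).1 (Ne.symm h2), lt_of_le_of_ne (hβ c).2 h3⟩
      · rintro ⟨h1, h2, h3⟩
        exact ⟨h1, ne_of_gt h2, ne_of_lt h3⟩
    have hDβ : ∑ c ∈ (F.filter (fun c => ¬ β c = 0)).filter (fun c => ¬ β c = π), β c
        = 2 * π - (n e : ℝ) * π := by
      have hs : ∑ c ∈ F, β c = 2 * π := hsum e
      have hsplitβ :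
          ∑ c ∈ F, β c =
            (∑ c ∈ F.filter (fun c => β c = 0), β c) +
            ((∑ c ∈ (F.filter (fun c => ¬ β c = 0)).filter (fun c => β c = π), β c) +
             (∑ c ∈ (F.filter (fun c => ¬ β c = 0)).filter (fun c => ¬ β c = π), β c)) := by
        rw [Finset.sum_filter_add_sum_filter_not
          (F.filter (fun c => ¬ β c = 0)) (fun c => β c = π) β,
          Finset.sum_filter_add_sum_filter_not F (fun c => β c = 0) β]
      have hAβ : ∑ c ∈ F.filter (fun c => β c = 0), β c = 0 := by
        apply Finset.sum_eq_zero
        intro c hc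
        simp only [Finset.mem_filter] at hc
        exact hc.2
      have hBβ : ∑ c ∈ (F.filter (fun c => ¬ β c = 0)).filter (fun c => β c = π), β c
          = (n e : ℝ) * π := by
        have h1 : ∀ c ∈ (F.filter (fun c => ¬ β c = 0)).filter (fun c => β c = π),
            β c = π := by
          intro c hc
          simp only [Finset.mem_filter] at hc
          exact hc.2
        rw [Finset.sum_congr rfl h1, Finset.sum_const, nsmul_eq_mul, hBcard]
      rw [hsplitβ, hAβ, hBβ] at hs
      linarith
    have hD : ∑ c ∈ (F.filter (fun c => ¬ β c = 0)).filter (fun c => ¬ β c = π), α t c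
        = (2 * π - (n e : ℝ) * π) - (k e : ℝ) * (M * t) := by
      have h1 : ∀ c ∈ (F.filter (fun c => ¬ β c = 0)).filter (fun c => ¬ β c = π),
          α t c = β c - M * t := by
        intro c hc
        simp only [hF, Finset.mem_filter, Finset.mem_univ, true_and] at hc
        rw [hα, if_neg hc.1.2, if_neg hc.2, hc.1.1]
      rw [Finset.sum_congr rfl h1, Finset.sum_sub_distrib, Finset.sum_const, nsmul_eq_mul,
        hDcard, hDβ]
    have hkM : (k e : ℝ) * M = (m e : ℝ) - 3 * (n e : ℝ) := by
      rw [hM, mul_div_cancel₀ _ hkpos.ne']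
    have hkMt : (k e : ℝ) * (M * t) = ((m e : ℝ) - 3 * (n e : ℝ)) * t := by
      rw [← mul_assoc, hkM]
    rw [hsplit, hA, hB, hD, hkMt]
    ring
  -- positivity, eventually
  have hpos : ∀ c : C, ∀ᶠ t in nhdsWithin (0:ℝ) (Set.Ioi 0), 0 < α t c := by
    intro c
    by_cases h0 : β c = 0
    · filter_upwards [self_mem_nhdsWithin] with t ht
      rw [hα, if_pos h0]
      exact ht
    by_cases hp : β c = π
    · have htend : Filter.Tendsto (fun t : ℝ => π - 3 * t) (nhds 0) (nhds π) := by
        have hcont : Continuous (fun t : ℝ => π - 3 * t) := by fun_prop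
        simpa using hcont.tendsto 0
      have h2 := (htend.eventually (eventually_gt_nhds hπ)).filter_mono (nhdsWithin_le_nhds (s := Set.Ioi (0:ℝ)))
      filter_upwards [h2] with t ht
      rw [hα, if_neg h0, if_pos hp]
      exact ht
    · have hb : 0 < β c := lt_of_le_of_ne (hβ c).1 (Ne.symm h0)
      have htend : Filter.Tendsto
          (fun t : ℝ => β c - (((m (p c) : ℝ) - 3 * (n (p c) : ℝ)) / (k (p c) : ℝ)) * t)
          (nhds 0) (nhds (β c)) := by
        have hcont : Continuous
            (fun t : ℝ => β c - (((m (p c) : ℝ) - 3 * (n (p c) : ℝ)) / (k (p c) : ℝ)) * t) := by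
          fun_prop
        simpa using hcont.tendsto 0
      have h2 := (htend.eventually (eventually_gt_nhds hb)).filter_mono (nhdsWithin_le_nhds (s := Set.Ioi (0:ℝ)))
      filter_upwards [h2] with t ht
      rw [hα, if_neg h0, if_neg hp]
      exact ht
  -- triples, eventually
  have htri : ∀ s ∈ S, ∀ᶠ t in nhdsWithin (0:ℝ) (Set.Ioi 0),
      α t s.1 + α t s.2.1 + α t s.2.2 < π := by
    intro s hs
    rcases hS s hs with ⟨⟨h1a, h1b⟩, ⟨h2a, h2b⟩, ⟨h3a, h3b⟩, hs3⟩ | hmul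
    · have htend : Filter.Tendsto
          (fun t : ℝ =>
            (β s.1 - (((m (p s.1) : ℝ) - 3 * (n (p s.1) : ℝ)) / (k (p s.1) : ℝ)) * t) +
            (β s.2.1 - (((m (p s.2.1) : ℝ) - 3 * (n (p s.2.1) : ℝ)) / (k (p s.2.1) : ℝ)) * t) +
            (β s.2.2 - (((m (p s.2.2) : ℝ) - 3 * (n (p s.2.2) : ℝ)) / (k (p s.2.2) : ℝ)) * t))
          (nhds 0) (nhds (β s.1 + β s.2.1 + β s.2.2)) := by
        have h : Continuous (fun t : ℝ =>
            (β s.1 - (((m (p s.1) : ℝ) - 3 * (n (p s.1) : ℝ)) / (k (p s.1) : ℝ)) * t) +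
            (β s.2.1 - (((m (p s.2.1) : ℝ) - 3 * (n (p s.2.1) : ℝ)) / (k (p s.2.1) : ℝ)) * t) +
            (β s.2.2 - (((m (p s.2.2) : ℝ) - 3 * (n (p s.2.2) : ℝ)) / (k (p s.2.2) : ℝ)) * t)) := by
          fun_prop
        have h2 := h.tendsto (0:ℝ)
        simpa using h2
      have h3 := (htend.eventually (eventually_lt_nhds hs3)).filter_mono (nhdsWithin_le_nhds (s := Set.Ioi (0:ℝ)))
      filter_upwards [h3] with t ht
      rw [hα t s.1, hα t s.2.1, hα t s.2.2,
        if_neg h1a.ne', if_neg (ne_of_lt h1b),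
        if_neg h2a.ne', if_neg (ne_of_lt h2b),
        if_neg h3a.ne', if_neg (ne_of_lt h3b)]
      exact ht
    · have mem1 : β s.1 = 0 ∨ β s.1 = π := by
        have h : β s.1 ∈ ({0, 0, π} : Multiset ℝ) := by
          rw [← hmul]; simp
        simpa using h
      have mem2 : β s.2.1 = 0 ∨ β s.2.1 = π := by
        have h : β s.2.1 ∈ ({0, 0, π} : Multiset ℝ) := by
          rw [← hmul]; simp
        simpa using h
      have mem3 : β s.2.2 = 0 ∨ β s.2.2 = π := by
        have h : β s.2.2 ∈ ({0, 0, π} : Multiset ℝ) := by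
          rw [← hmul]; simp
        simpa using h
      have hsum3 : β s.1 + β s.2.1 + β s.2.2 = π := by
        have h := congrArg Multiset.sum hmul
        simp [Multiset.sum_cons] at h
        linarith
      filter_upwards [self_mem_nhdsWithin] with t ht
      have ht' : 0 < t := ht
      rcases mem1 with h1 | h1 <;> rcases mem2 with h2 | h2 <;> rcases mem3 with h3 | h3 <;>
        rw [h1, h2, h3] at hsum3 <;>
        rw [hα t s.1, hα t s.2.1, hα t s.2.2, h1, h2, h3] <;>
        norm_num [hπ.ne'] <;>
        linarith
  have key : ∀ᶠ t in nhdsWithin (0:ℝ) (Set.Ioi 0),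
      (∀ c, 0 < α t c) ∧
      (∀ e, ∑ c ∈ Finset.univ.filter (fun c => p c = e), α t c = 2 * π) ∧
      (∀ s ∈ S, α t s.1 + α t s.2.1 + α t s.2.2 < π) := by
    refine (Filter.eventually_all.mpr hpos).and
      ((Filter.Eventually.of_forall (fun t => hedge t)).and ?_)
    exact (Filter.eventually_all_finset S).mpr htri
  rcases mem_nhdsGT_iff_exists_Ioo_subset.mp key with ⟨u, hu, hsub⟩
  exact ⟨u, hu, fun t ht htu => hsub ⟨ht, htu⟩⟩
end
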